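/- Let W(j), j ≥ 0, be the standard random walk on Z^n starting at the origin, and let m ≥ n⁴ be an integer. Then the vector X := √(n/m) · W(m) is isotropic (E X = 0 and E X Xᵗ = I), and for every unit vector y ∈ S^{n−1} and every t > 0, P{|⟨X, y⟩| ≥ t} ≤ exp(−2(mn)^{1/4}) + 2 exp(−t²/4). -/

import Mathlib

open MeasureTheory ProbabilityTheory Real
open scoped Classical

lemma sinh_convex : ConvexOn ℝ (Set.Ici (0:ℝ)) Real.sinh := by
  apply convexOn_of_deriv2_nonneg (convex_Ici 0) Real.continuous_sinh.continuousOn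
    Real.differentiable_sinh.differentiableOn
  · rw [Real.deriv_sinh]
    exact Real.differentiable_cosh.differentiableOn
  · intro x hx
    simp only [Function.iterate_succ, Function.iterate_zero, Function.comp_apply, id]
    rw [Real.deriv_sinh, Real.deriv_cosh]
    rw [interior_Ici] at hx
    exact (Real.sinh_pos_iff.2 hx).le

lemma sinh_mul_le {c u : ℝ} (hc0 : 0 ≤ c) (hc1 : c ≤ 1) (hu : 0 ≤ u) :
    Real.sinh (c * u) ≤ c * Real.sinh u := by
  have h := sinh_convex.2 (Set.mem_Ici.2 hu) (Set.mem_Ici.2 (le_refl (0:ℝ))) hc0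
    (by linarith : (0:ℝ) ≤ 1 - c) (by ring)
  simpa using h

lemma cosh_eq_sinh_half (x : ℝ) : Real.cosh x = 2 * Real.sinh (x/2) ^ 2 + 1 := by
  have h : Real.cosh x = Real.cosh (x/2 + x/2) := by norm_num
  rw [h, Real.cosh_add]
  nlinarith [Real.cosh_sq (x/2)]

lemma cosh_mul_sub_one_le {x l : ℝ} (hx : x ^ 2 ≤ 1) (hl : 0 ≤ l) :
    Real.cosh (l * x) - 1 ≤ x ^ 2 * (Real.cosh l - 1) := by
  have hax : |x| ≤ 1 := (sq_le_one_iff_abs_le_one x).1 hx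
  have h1 : Real.cosh (l * x) = 2 * Real.sinh (l * x / 2) ^ 2 + 1 := cosh_eq_sinh_half _
  have h2 : Real.cosh l = 2 * Real.sinh (l / 2) ^ 2 + 1 := cosh_eq_sinh_half _
  have hs : |Real.sinh (l * x / 2)| ≤ |x| * Real.sinh (l / 2) := by
    rw [Real.abs_sinh]
    have : |l * x / 2| = |x| * (l / 2) := by
      rw [abs_div, abs_mul, abs_of_nonneg hl]
      rw [abs_of_nonneg (by norm_num : (0:ℝ) ≤ 2)]
      ring
    rw [this]
    exact sinh_mul_le (abs_nonneg x) hax (by linarith)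
  have hsq : Real.sinh (l * x / 2) ^ 2 ≤ x ^ 2 * Real.sinh (l / 2) ^ 2 := by
    have h3 := mul_self_le_mul_self (abs_nonneg (Real.sinh (l * x / 2))) hs
    have h4 := sq_abs (Real.sinh (l * x / 2))
    have h5 := sq_abs x
    nlinarith
  rw [h1, h2]
  nlinarith
lemma cosh_one_le_two : Real.cosh 1 ≤ 2 := by
  rw [Real.cosh_eq]
  have h1 : Real.exp 1 < 2.7182818286 := Real.exp_one_lt_d9
  have h2 : Real.exp (-1) ≤ 1 := by
    rw [Real.exp_le_one_iff]; norm_num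
  linarith

lemma cosh_sub_one_le_sq {l : ℝ} (h0 : 0 ≤ l) (h1 : l ≤ 1) :
    Real.cosh l - 1 ≤ l ^ 2 := by
  have := cosh_mul_sub_one_le (x := l) (l := 1) (by nlinarith) (by norm_num)
  rw [one_mul] at this
  nlinarith [cosh_one_le_two, sq_nonneg l]

variable {n : ℕ}

lemma esingle_inj {i j : Fin n} (h : EuclideanSpace.single i (1:ℝ) = EuclideanSpace.single j 1) :
    i = j := by
  by_contra hne
  have h' := congrArg (fun v : EuclideanSpace ℝ (Fin n) => v i) h
  simp [EuclideanSpace.single_apply, hne] at h'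

lemma esingle_ne_neg (i j : Fin n) :
    EuclideanSpace.single i (1:ℝ) ≠ -EuclideanSpace.single j 1 := by
  intro h
  have h' := congrArg (fun v : EuclideanSpace ℝ (Fin n) => v i) h
  simp only [EuclideanSpace.single_apply, if_pos rfl, PiLp.neg_apply] at h'
  by_cases hij : i = j <;> simp [hij] at h' <;> norm_num at h'

lemma rep {G : Type*} [AddCommMonoid G] (F : EuclideanSpace ℝ (Fin n) → G)
    (v : EuclideanSpace ℝ (Fin n))
    (hv : ∃ i : Fin n, v = EuclideanSpace.single i 1 ∨ v = -EuclideanSpace.single i 1) :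
    F v = ∑ i : Fin n,
      ((if v = EuclideanSpace.single i 1 then F (EuclideanSpace.single i 1) else 0)
      + (if v = -EuclideanSpace.single i 1 then F (-EuclideanSpace.single i 1) else 0)) := by
  obtain ⟨i, hi | hi⟩ := hv
  · rw [Finset.sum_eq_single i]
    · rw [if_pos hi, if_neg (by rw [hi]; exact esingle_ne_neg i i), hi, add_zero]
    · intro j _ hj
      rw [if_neg (fun hh => hj (esingle_inj (hi.symm.trans hh)).symm),
        if_neg (by rw [hi]; exact esingle_ne_neg i j), add_zero]
    · intro hmem; exact absurd (Finset.mem_univ i) hmem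
  · rw [Finset.sum_eq_single i]
    · rw [if_pos hi, if_neg (by rw [hi]; intro hh; exact esingle_ne_neg i i hh.symm), hi, zero_add]
    · intro j _ hj
      rw [if_neg (by rw [hi]; intro hh; exact esingle_ne_neg j i hh.symm),
        if_neg (fun hh => hj (esingle_inj (neg_injective (hi.symm.trans hh))).symm), add_zero]
    · intro hmem; exact absurd (Finset.mem_univ i) hmem

variable {n : ℕ} {Ω : Type} [MeasurableSpace Ω] {μ : Measure Ω} [IsProbabilityMeasure μ]

lemma meas_eq_set (V : Ω → EuclideanSpace ℝ (Fin n)) (hV : Measurable V)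
    (v : EuclideanSpace ℝ (Fin n)) : MeasurableSet {ω | V ω = v} :=
  hV (measurableSet_singleton v)

lemma integral_comp (V : Ω → EuclideanSpace ℝ (Fin n)) (hV : Measurable V)
    (hvals : ∀ ω, ∃ i : Fin n, V ω = EuclideanSpace.single i 1 ∨ V ω = -EuclideanSpace.single i 1)
    (hunif : ∀ i : Fin n, μ {ω | V ω = EuclideanSpace.single i 1} = 1 / (2 * n) ∧
      μ {ω | V ω = -EuclideanSpace.single i 1} = 1 / (2 * n))
    {G : Type*} [NormedAddCommGroup G] [NormedSpace ℝ G] [CompleteSpace G] (F : EuclideanSpace ℝ (Fin n) → G) :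
    Integrable (fun ω => F (V ω)) μ ∧
    ∫ ω, F (V ω) ∂μ = ∑ i : Fin n, ((1/(2*(n:ℝ))) • F (EuclideanSpace.single i 1)
      + (1/(2*(n:ℝ))) • F (-EuclideanSpace.single i 1)) := by
  have hfun : (fun ω => F (V ω)) = fun ω => ∑ i : Fin n,
      (({ω' | V ω' = EuclideanSpace.single i 1}).indicator
          (fun _ => F (EuclideanSpace.single i 1)) ω
        + ({ω' | V ω' = -EuclideanSpace.single i 1}).indicator
          (fun _ => F (-EuclideanSpace.single i 1)) ω) := by
    funext ω
    rw [rep F (V ω) (hvals ω)]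
    refine Finset.sum_congr rfl fun i _ => ?_
    simp only [Set.indicator_apply, Set.mem_setOf_eq]
  have hint : ∀ i : Fin n,
      Integrable (fun ω => ({ω' | V ω' = EuclideanSpace.single i 1}).indicator
          (fun _ => F (EuclideanSpace.single i 1)) ω
        + ({ω' | V ω' = -EuclideanSpace.single i 1}).indicator
          (fun _ => F (-EuclideanSpace.single i 1)) ω) μ := by
    intro i
    exact ((integrable_const _).indicator (meas_eq_set V hV _)).add
      ((integrable_const _).indicator (meas_eq_set V hV _))
  have htr : ∀ v : EuclideanSpace ℝ (Fin n), μ {ω | V ω = v} = 1 / (2 * n) →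
      μ.real {ω | V ω = v} = 1/(2*(n:ℝ)) := by
    intro v hv
    rw [measureReal_def, hv]
    rw [ENNReal.toReal_div]
    simp [ENNReal.toReal_mul]
  constructor
  · rw [hfun]
    exact integrable_finset_sum _ (fun i _ => hint i)
  · rw [hfun, integral_finset_sum _ (fun i _ => hint i)]
    refine Finset.sum_congr rfl fun i _ => ?_
    rw [integral_add ((integrable_const _).indicator (meas_eq_set V hV _))
        ((integrable_const _).indicator (meas_eq_set V hV _)),
      integral_indicator_const _ (meas_eq_set V hV _),
      integral_indicator_const _ (meas_eq_set V hV _),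
      htr _ (hunif i).1, htr _ (hunif i).2]

section Core
variable {Ω : Type} [MeasurableSpace Ω]

lemma inner_meas {n : ℕ} (y : EuclideanSpace ℝ (Fin n)) :
    Measurable (fun v : EuclideanSpace ℝ (Fin n) => (inner ℝ v y : ℝ)) :=
  (continuous_id.inner continuous_const).measurable

lemma sum_sq_eq_one {n : ℕ} {y : EuclideanSpace ℝ (Fin n)} (hy : ‖y‖ = 1) :
    ∑ i : Fin n, y i ^ 2 = 1 := by
  have h := real_inner_self_eq_norm_sq y
  rw [hy] at h
  rw [PiLp.inner_apply] at h
  simp only [RCLike.inner_apply, conj_trivial] at h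
  calc ∑ i : Fin n, y i ^ 2 = ∑ i : Fin n, y i * y i := by
        refine Finset.sum_congr rfl fun i _ => ?_; ring
    _ = 1 := by rw [h]; norm_num

lemma onesided (μ : Measure Ω) [IsProbabilityMeasure μ]
    (n m : ℕ) (hn : 0 < n)
    (S : ℕ → Ω → EuclideanSpace ℝ (Fin n))
    (hmeas : ∀ k, Measurable (S k))
    (hindep : iIndepFun S μ)
    (hvals : ∀ k ω, ∃ i : Fin n,
      S k ω = EuclideanSpace.single i 1 ∨ S k ω = -EuclideanSpace.single i 1)
    (hunif : ∀ k (i : Fin n),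
      μ {ω | S k ω = EuclideanSpace.single i 1} = 1 / (2 * n) ∧
      μ {ω | S k ω = -EuclideanSpace.single i 1} = 1 / (2 * n))
    (y : EuclideanSpace ℝ (Fin n)) (hy : ‖y‖ = 1) (l u : ℝ) (hl : 0 ≤ l) :
    μ {ω | u ≤ ∑ k ∈ Finset.range m, (inner ℝ (S k ω) y : ℝ)} ≤
      ENNReal.ofReal (Real.exp (-l * u + ((m : ℝ)/n) * (Real.cosh l - 1))) := by
  set s : ℕ → Ω → ℝ := fun k => (fun v : EuclideanSpace ℝ (Fin n) => (inner ℝ v y : ℝ)) ∘ S k with hs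
  have hsmeas : ∀ k, Measurable (s k) := fun k => (inner_meas y).comp (hmeas k)
  have hsindep : iIndepFun s μ :=
    hindep.comp _ (fun _ => inner_meas y)
  -- per-coordinate integrability and mgf bound
  have hIk : ∀ k, Integrable (fun ω => Real.exp (l * s k ω)) μ := by
    intro k
    exact (integral_comp (S k) (hmeas k) (hvals k) (hunif k)
      (fun v => Real.exp (l * (inner ℝ v y : ℝ)))).1
  have hmgf_eq : ∀ k, mgf (s k) μ l
      = ∑ i : Fin n, (1/(n:ℝ)) * Real.cosh (l * y i) := by
    intro k
    have h := (integral_comp (S k) (hmeas k) (hvals k) (hunif k)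
      (fun v => Real.exp (l * (inner ℝ v y : ℝ)))).2
    have hval : ∑ i : Fin n, ((1/(2*(n:ℝ))) • Real.exp (l * (inner ℝ (EuclideanSpace.single i 1) y : ℝ))
        + (1/(2*(n:ℝ))) • Real.exp (l * (inner ℝ (-EuclideanSpace.single i 1) y : ℝ)))
        = ∑ i : Fin n, (1/(n:ℝ)) * Real.cosh (l * y i) := by
      refine Finset.sum_congr rfl fun i _ => ?_
      rw [EuclideanSpace.inner_single_left, inner_neg_left, EuclideanSpace.inner_single_left]
      simp only [conj_trivial, one_mul, smul_eq_mul]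
      rw [Real.cosh_eq]
      have hne : (n:ℝ) ≠ 0 := Nat.cast_ne_zero.2 hn.ne'
      rw [mul_neg, Real.exp_neg]
      field_simp
    exact h.trans hval
  have hmgf_le : ∀ k, mgf (s k) μ l ≤ Real.exp ((Real.cosh l - 1)/n) := by
    intro k
    rw [hmgf_eq k]
    have hb : ∀ i : Fin n, (1/(n:ℝ)) * Real.cosh (l * y i)
        ≤ (1/(n:ℝ)) * (1 + y i ^ 2 * (Real.cosh l - 1)) := by
      intro i
      have hyi : y i ^ 2 ≤ 1 := by
        have := sum_sq_eq_one hy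
        have h2 : ∀ j ∈ Finset.univ, (0:ℝ) ≤ y j ^ 2 := fun j _ => sq_nonneg _
        calc y i ^ 2 ≤ ∑ j : Fin n, y j ^ 2 :=
              Finset.single_le_sum h2 (Finset.mem_univ i)
          _ = 1 := this
      have := cosh_mul_sub_one_le hyi hl
      have hnpos : (0:ℝ) < n := Nat.cast_pos.2 hn
      have h1 : (0:ℝ) ≤ 1/(n:ℝ) := by positivity
      nlinarith
    calc ∑ i : Fin n, (1/(n:ℝ)) * Real.cosh (l * y i)
        ≤ ∑ i : Fin n, (1/(n:ℝ)) * (1 + y i ^ 2 * (Real.cosh l - 1)) :=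
          Finset.sum_le_sum (fun i _ => hb i)
      _ = 1 + (Real.cosh l - 1)/n := by
          have hne : (n:ℝ) ≠ 0 := Nat.cast_ne_zero.2 hn.ne'
          rw [← Finset.mul_sum, Finset.sum_add_distrib, Finset.sum_const, Finset.card_univ,
            Fintype.card_fin, ← Finset.sum_mul, sum_sq_eq_one hy]
          field_simp
          simp
      _ ≤ Real.exp ((Real.cosh l - 1)/n) := by
          have := Real.add_one_le_exp ((Real.cosh l - 1)/n)
          linarith
  have hIexp : Integrable (fun ω => Real.exp (l * (∑ k ∈ Finset.range m, s k) ω)) μ :=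
    hsindep.integrable_exp_mul_sum hsmeas (fun k _ => hIk k)
  have chern := measure_ge_le_exp_mul_mgf (X := ∑ k ∈ Finset.range m, s k) (μ := μ) u hl hIexp
  have hmgfsum : mgf (∑ k ∈ Finset.range m, s k) μ l
      ≤ Real.exp ((m : ℝ) * ((Real.cosh l - 1)/n)) := by
    rw [hsindep.mgf_sum hsmeas]
    calc ∏ k ∈ Finset.range m, mgf (s k) μ l
        ≤ ∏ k ∈ Finset.range m, Real.exp ((Real.cosh l - 1)/n) :=
          Finset.prod_le_prod (fun k _ => mgf_nonneg) (fun k _ => hmgf_le k)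
      _ = Real.exp ((Real.cosh l - 1)/n) ^ m := by
          rw [Finset.prod_const, Finset.card_range]
      _ = Real.exp ((m : ℝ) * ((Real.cosh l - 1)/n)) := by
          rw [← Real.exp_nat_mul]
  have hset : {ω | u ≤ ∑ k ∈ Finset.range m, (inner ℝ (S k ω) y : ℝ)}
      = {ω | u ≤ (∑ k ∈ Finset.range m, s k) ω} := by
    ext ω
    simp [Finset.sum_apply, hs]
  rw [hset]
  have hfin : μ {ω | u ≤ (∑ k ∈ Finset.range m, s k) ω} ≠ ⊤ := measure_ne_top μ _
  rw [← ENNReal.ofReal_toReal hfin]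
  apply ENNReal.ofReal_le_ofReal
  calc (μ {ω | u ≤ (∑ k ∈ Finset.range m, s k) ω}).toReal
      ≤ Real.exp (-l * u) * mgf (∑ k ∈ Finset.range m, s k) μ l := chern
    _ ≤ Real.exp (-l * u) * Real.exp ((m : ℝ) * ((Real.cosh l - 1)/n)) := by
        have := Real.exp_pos (-l * u)
        nlinarith [mgf_nonneg (X := ∑ k ∈ Finset.range m, s k) (μ := μ) (t := l)]
    _ = Real.exp (-l * u + ((m : ℝ)/n) * (Real.cosh l - 1)) := by
        rw [← Real.exp_add]
        ring_nf

end Core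

lemma norm_val {n : ℕ} (v : EuclideanSpace ℝ (Fin n))
    (hv : ∃ i : Fin n, v = EuclideanSpace.single i 1 ∨ v = -EuclideanSpace.single i 1) :
    ‖v‖ = 1 := by
  obtain ⟨i, hi | hi⟩ := hv <;> rw [hi] <;> simp

set_option maxHeartbeats 1000000 in
theorem walk_on_Zn_isotropic_and_concentrated
    {Ω : Type} [MeasurableSpace Ω] (μ : Measure Ω) [IsProbabilityMeasure μ]
    (n m : ℕ) (hn : 0 < n) (hm : n ^ 4 ≤ m)
    (S : ℕ → Ω → EuclideanSpace ℝ (Fin n))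
    (hmeas : ∀ k, Measurable (S k))
    (hindep : iIndepFun S μ)
    (hvals : ∀ k ω, ∃ i : Fin n,
      S k ω = EuclideanSpace.single i 1 ∨ S k ω = -EuclideanSpace.single i 1)
    (hunif : ∀ k (i : Fin n),
      μ {ω | S k ω = EuclideanSpace.single i 1} = 1 / (2 * n) ∧
      μ {ω | S k ω = -EuclideanSpace.single i 1} = 1 / (2 * n)) :
    (∫ ω, (Real.sqrt ((n : ℝ) / m) • ∑ k ∈ Finset.range m, S k ω) ∂μ) = 0 ∧
    (∀ y z : EuclideanSpace ℝ (Fin n),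
      (∫ ω, (@inner ℝ (EuclideanSpace ℝ (Fin n)) _
            (Real.sqrt ((n : ℝ) / m) • ∑ k ∈ Finset.range m, S k ω) y) *
          (@inner ℝ (EuclideanSpace ℝ (Fin n)) _
            (Real.sqrt ((n : ℝ) / m) • ∑ k ∈ Finset.range m, S k ω) z) ∂μ) =
        @inner ℝ (EuclideanSpace ℝ (Fin n)) _ y z) ∧
    (∀ y : EuclideanSpace ℝ (Fin n), ‖y‖ = 1 → ∀ t : ℝ, 0 < t →
      μ {ω | t ≤ |@inner ℝ (EuclideanSpace ℝ (Fin n)) _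
            (Real.sqrt ((n : ℝ) / m) • ∑ k ∈ Finset.range m, S k ω) y|} ≤
        ENNReal.ofReal (Real.exp (-2 * ((m : ℝ) * n) ^ ((1 : ℝ) / 4)) +
          2 * Real.exp (-t ^ 2 / 4))) := by
  have hm0 : 0 < m := lt_of_lt_of_le (pow_pos hn 4) hm
  have hnR : (0:ℝ) < n := Nat.cast_pos.2 hn
  have hmR : (0:ℝ) < m := Nat.cast_pos.2 hm0
  set c : ℝ := Real.sqrt ((n : ℝ) / m) with hcdef
  have hc : 0 < c := Real.sqrt_pos.2 (div_pos hnR hmR)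
  have hc2 : c * c = (n:ℝ)/m := Real.mul_self_sqrt (div_pos hnR hmR).le
  refine ⟨?_, ?_, ?_⟩
  · -- mean zero
    rw [integral_smul]
    have h : (∫ ω, ∑ k ∈ Finset.range m, S k ω ∂μ) = 0 := by
      rw [integral_finset_sum _ (fun k _ =>
        (integral_comp (S k) (hmeas k) (hvals k) (hunif k) (fun v => v)).1)]
      refine Finset.sum_eq_zero fun k _ => ?_
      rw [(integral_comp (S k) (hmeas k) (hvals k) (hunif k) (fun v => v)).2]
      simp
    rw [h, smul_zero]
  · -- isotropy
    intro y z
    have hrw : ∀ ω, (@inner ℝ (EuclideanSpace ℝ (Fin n)) _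
          (c • ∑ k ∈ Finset.range m, S k ω) y) *
        (@inner ℝ (EuclideanSpace ℝ (Fin n)) _ (c • ∑ k ∈ Finset.range m, S k ω) z)
        = ((n:ℝ)/m) * ((∑ k ∈ Finset.range m, (inner ℝ (S k ω) y : ℝ)) *
            (∑ k ∈ Finset.range m, (inner ℝ (S k ω) z : ℝ))) := by
      intro ω
      rw [real_inner_smul_left, real_inner_smul_left, sum_inner, sum_inner, ← hc2]
      ring
    simp only [hrw]
    rw [integral_const_mul]
    have hprod : ∀ k j : ℕ, Integrable
        (fun ω => (inner ℝ (S k ω) y : ℝ) * (inner ℝ (S j ω) z : ℝ)) μ := by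
      intro k j
      refine Integrable.bdd_mul (c := ‖y‖) ?_ ?_ ?_
      · exact (integral_comp (S j) (hmeas j) (hvals j) (hunif j) (fun v => (inner ℝ v z : ℝ))).1
      · exact ((inner_meas y).comp (hmeas k)).aestronglyMeasurable
      · refine Filter.Eventually.of_forall fun ω => ?_
        rw [Real.norm_eq_abs]
        calc |(inner ℝ (S k ω) y : ℝ)| ≤ ‖S k ω‖ * ‖y‖ := abs_real_inner_le_norm _ _
          _ = ‖y‖ := by rw [norm_val (S k ω) (hvals k ω), one_mul]
    have hmean : ∀ (j : ℕ) (w : EuclideanSpace ℝ (Fin n)),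
        (∫ ω, (inner ℝ (S j ω) w : ℝ) ∂μ) = 0 := by
      intro j w
      rw [(integral_comp (S j) (hmeas j) (hvals j) (hunif j) (fun v => (inner ℝ v w : ℝ))).2]
      refine Finset.sum_eq_zero fun i _ => ?_
      rw [inner_neg_left]
      simp
    have hdiag : ∀ j : ℕ,
        (∫ ω, (inner ℝ (S j ω) y : ℝ) * (inner ℝ (S j ω) z : ℝ) ∂μ)
          = (1/(n:ℝ)) * (inner ℝ y z : ℝ) := by
      intro j
      rw [(integral_comp (S j) (hmeas j) (hvals j) (hunif j)
        (fun v => (inner ℝ v y : ℝ) * (inner ℝ v z : ℝ))).2]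
      have hne : (n:ℝ) ≠ 0 := hnR.ne'
      have hyz : (inner ℝ y z : ℝ) = ∑ i : Fin n, y i * z i := by
        rw [PiLp.inner_apply]
        simp
        exact Finset.sum_congr rfl fun i _ => mul_comm _ _
      rw [hyz, Finset.mul_sum]
      refine Finset.sum_congr rfl fun i _ => ?_
      rw [inner_neg_left, inner_neg_left, EuclideanSpace.inner_single_left,
        EuclideanSpace.inner_single_left]
      simp only [conj_trivial, one_mul, smul_eq_mul, mul_neg, neg_mul, neg_neg]
      field_simp
      ring
    have hoff : ∀ k j : ℕ, k ≠ j →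
        (∫ ω, (inner ℝ (S k ω) y : ℝ) * (inner ℝ (S j ω) z : ℝ) ∂μ) = 0 := by
      intro k j hkj
      have hind : IndepFun (fun ω => (inner ℝ (S k ω) y : ℝ))
          (fun ω => (inner ℝ (S j ω) z : ℝ)) μ :=
        (hindep.indepFun hkj).comp (inner_meas y) (inner_meas z)
      have := hind.integral_mul_eq_mul_integral
        (((inner_meas y).comp (hmeas k)).aestronglyMeasurable)
        (((inner_meas z).comp (hmeas j)).aestronglyMeasurable)
      have h2 : (∫ ω, (inner ℝ (S k ω) y : ℝ) * (inner ℝ (S j ω) z : ℝ) ∂μ)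
          = (∫ ω, (inner ℝ (S k ω) y : ℝ) ∂μ) * (∫ ω, (inner ℝ (S j ω) z : ℝ) ∂μ) := this
      rw [h2, hmean k y, zero_mul]
    have hsum : (∫ ω, (∑ k ∈ Finset.range m, (inner ℝ (S k ω) y : ℝ)) *
        (∑ k ∈ Finset.range m, (inner ℝ (S k ω) z : ℝ)) ∂μ)
        = (m:ℝ) * ((1/(n:ℝ)) * (inner ℝ y z : ℝ)) := by
      have hexp : ∀ ω, (∑ k ∈ Finset.range m, (inner ℝ (S k ω) y : ℝ)) *
          (∑ k ∈ Finset.range m, (inner ℝ (S k ω) z : ℝ))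
          = ∑ k ∈ Finset.range m, ∑ j ∈ Finset.range m,
              (inner ℝ (S k ω) y : ℝ) * (inner ℝ (S j ω) z : ℝ) := by
        intro ω
        rw [Finset.sum_mul_sum]
      simp only [hexp]
      rw [integral_finset_sum _ (fun k _ => integrable_finset_sum _ (fun j _ => hprod k j))]
      have : ∀ k ∈ Finset.range m,
          (∑ j ∈ Finset.range m, ∫ ω, (inner ℝ (S k ω) y : ℝ) * (inner ℝ (S j ω) z : ℝ) ∂μ)
            = (1/(n:ℝ)) * (inner ℝ y z : ℝ) := by
        intro k hk
        rw [Finset.sum_eq_single_of_mem k hk (fun j _ hj => hoff k j (Ne.symm hj))]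
        exact hdiag k
      calc ∑ k ∈ Finset.range m, ∫ ω, ∑ j ∈ Finset.range m,
            (inner ℝ (S k ω) y : ℝ) * (inner ℝ (S j ω) z : ℝ) ∂μ
          = ∑ k ∈ Finset.range m, ∑ j ∈ Finset.range m,
            ∫ ω, (inner ℝ (S k ω) y : ℝ) * (inner ℝ (S j ω) z : ℝ) ∂μ := by
            refine Finset.sum_congr rfl fun k _ => ?_
            exact integral_finset_sum _ (fun j _ => hprod k j)
        _ = ∑ k ∈ Finset.range m, (1/(n:ℝ)) * (inner ℝ y z : ℝ) :=
            Finset.sum_congr rfl this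
        _ = (m:ℝ) * ((1/(n:ℝ)) * (inner ℝ y z : ℝ)) := by
            rw [Finset.sum_const, Finset.card_range, nsmul_eq_mul]
    rw [hsum]
    have hne : (n:ℝ) ≠ 0 := hnR.ne'
    have hme : (m:ℝ) ≠ 0 := hmR.ne'
    field_simp
  · -- concentration
    intro y hy t ht
    set a : ℝ := (m:ℝ)/n with hadef
    have ha : 0 < a := div_pos hmR hnR
    set sa : ℝ := Real.sqrt a with hsadef
    have hsa : 0 < sa := Real.sqrt_pos.2 ha
    have hsa2 : sa * sa = a := Real.mul_self_sqrt ha.le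
    have hca : c * sa = 1 := by
      rw [hcdef, hsadef, hadef, ← Real.sqrt_mul (div_pos hnR hmR).le]
      rw [show (n:ℝ)/m * ((m:ℝ)/n) = 1 by field_simp]
      exact Real.sqrt_one
    set u : ℝ := t * sa with hudef
    have hu : 0 < u := mul_pos ht hsa
    set T : Ω → ℝ := fun ω => ∑ k ∈ Finset.range m, (inner ℝ (S k ω) y : ℝ) with hTdef
    have hTins : ∀ ω, (@inner ℝ (EuclideanSpace ℝ (Fin n)) _
        (c • ∑ k ∈ Finset.range m, S k ω) y) = c * T ω := by
      intro ω
      rw [real_inner_smul_left, sum_inner]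
    have hTneg : ∀ ω, (∑ k ∈ Finset.range m, (inner ℝ (S k ω) (-y) : ℝ)) = - T ω := by
      intro ω
      rw [hTdef, ← Finset.sum_neg_distrib]
      refine Finset.sum_congr rfl fun k _ => ?_
      rw [inner_neg_right]
    have hTbd : ∀ ω, |T ω| ≤ m := by
      intro ω
      calc |T ω| ≤ ∑ k ∈ Finset.range m, |(inner ℝ (S k ω) y : ℝ)| :=
            Finset.abs_sum_le_sum_abs _ _
        _ ≤ ∑ k ∈ Finset.range m, 1 := by
            refine Finset.sum_le_sum fun k _ => ?_
            calc |(inner ℝ (S k ω) y : ℝ)| ≤ ‖S k ω‖ * ‖y‖ := abs_real_inner_le_norm _ _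
              _ = 1 := by rw [norm_val (S k ω) (hvals k ω), hy, one_mul]
        _ = m := by rw [Finset.sum_const, Finset.card_range, nsmul_eq_mul, mul_one]
    have hev : {ω | t ≤ |@inner ℝ (EuclideanSpace ℝ (Fin n)) _
          (c • ∑ k ∈ Finset.range m, S k ω) y|}
        ⊆ {ω | u ≤ ∑ k ∈ Finset.range m, (inner ℝ (S k ω) y : ℝ)}
          ∪ {ω | u ≤ ∑ k ∈ Finset.range m, (inner ℝ (S k ω) (-y) : ℝ)} := by
      intro ω hω
      simp only [Set.mem_setOf_eq, hTins ω] at hω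
      have h1 : u ≤ |T ω| := by
        have h2 : |c * T ω| = c * |T ω| := by
          rw [abs_mul, abs_of_pos hc]
        rw [h2] at hω
        calc u = t * sa := rfl
          _ ≤ (c * |T ω|) * sa := by nlinarith
          _ = |T ω| * (c * sa) := by ring
          _ = |T ω| := by rw [hca, mul_one]
      rcases le_abs.mp h1 with h | h
      · exact Or.inl h
      · refine Or.inr ?_
        show u ≤ ∑ k ∈ Finset.range m, (inner ℝ (S k ω) (-y) : ℝ)
        rw [hTneg ω]
        exact h
    set b : ℝ := ((m:ℝ) * n) ^ ((1:ℝ)/4) with hbdef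
    have hb0 : 0 ≤ b := Real.rpow_nonneg (by positivity) _
    have hmain : μ {ω | t ≤ |@inner ℝ (EuclideanSpace ℝ (Fin n)) _
          (c • ∑ k ∈ Finset.range m, S k ω) y|}
        ≤ μ {ω | u ≤ ∑ k ∈ Finset.range m, (inner ℝ (S k ω) y : ℝ)}
          + μ {ω | u ≤ ∑ k ∈ Finset.range m, (inner ℝ (S k ω) (-y) : ℝ)} :=
      (measure_mono hev).trans (measure_union_le _ _)
    by_cases hsmall : u ≤ 2 * a
    · -- small deviation regime
      have h2a : (0:ℝ) < 2 * a := by linarith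
      have hl0 : 0 ≤ u/(2*a) := by positivity
      have hl1 : u/(2*a) ≤ 1 := by rw [div_le_one h2a]; exact hsmall
      have hu2 : u^2 = t^2 * a := by rw [hudef]; nlinarith
      have hexp : -(u/(2*a)) * u + ((m:ℝ)/n) * (Real.cosh (u/(2*a)) - 1) ≤ -t^2/4 := by
        have h1 : a * (Real.cosh (u/(2*a)) - 1) ≤ a * (u/(2*a))^2 :=
          mul_le_mul_of_nonneg_left (cosh_sub_one_le_sq hl0 hl1) ha.le
        have h2 : a * (u/(2*a))^2 = u^2/(4*a) := by field_simp; ring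
        have h3 : -(u/(2*a)) * u = -(u^2/(2*a)) := by field_simp
        have h4 : u^2/(2*a) = t^2/2 := by rw [hu2]; field_simp
        have h5 : u^2/(4*a) = t^2/4 := by rw [hu2]; field_simp
        rw [← hadef, h3, h4]
        linarith [h1.trans_eq (h2.trans h5)]
      have hle : Real.exp (-(u/(2*a)) * u + ((m:ℝ)/n) * (Real.cosh (u/(2*a)) - 1))
          ≤ Real.exp (-t^2/4) := Real.exp_le_exp.2 hexp
      have hA := (onesided μ n m hn S hmeas hindep hvals hunif y hy (u/(2*a)) u hl0).trans
        (ENNReal.ofReal_le_ofReal hle)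
      have hB := (onesided μ n m hn S hmeas hindep hvals hunif (-y)
        (by rw [norm_neg, hy]) (u/(2*a)) u hl0).trans (ENNReal.ofReal_le_ofReal hle)
      refine hmain.trans ((add_le_add hA hB).trans ?_)
      rw [← ENNReal.ofReal_add (Real.exp_pos _).le (Real.exp_pos _).le]
      refine ENNReal.ofReal_le_ofReal ?_
      have := (Real.exp_pos (-2 * b)).le
      linarith
    · by_cases hum : u ≤ m
      · -- moderate regime: 2a < u ≤ m, forces n ≥ 3
        have h2au : 2 * a < u := lt_of_not_ge hsmall
        have hn3 : (3:ℝ) ≤ n := by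
          have h2n : (2:ℝ) < n := by
            rw [hadef] at h2au
            have h1 : 2 * ((m:ℝ)/n) < m := lt_of_lt_of_le h2au hum
            have h1' : 2 * ((m:ℝ)/n) * n < (m:ℝ) * n := mul_lt_mul_of_pos_right h1 hnR
            have h1'' : 2 * ((m:ℝ)/n) * n = 2 * m := by field_simp
            rw [h1''] at h1'
            nlinarith
          have h2n' : (2:ℕ) < n := by exact_mod_cast h2n
          have : (3:ℕ) ≤ n := h2n'
          exact_mod_cast this
        have hmn4 : (n:ℝ)^4 ≤ m := by exact_mod_cast hm
        have hn3' : (27:ℝ) ≤ (n:ℝ)^3 := by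
          calc (27:ℝ) = 3^3 := by norm_num
            _ ≤ (n:ℝ)^3 := pow_le_pow_left₀ (by norm_num) hn3 3
        have ha27 : 27 ≤ a := by
          rw [hadef, le_div_iff₀ hnR]
          nlinarith
        have hb4 : b^4 = (m:ℝ)*n := by
          rw [hbdef, ← Real.rpow_natCast (((m:ℝ)*n) ^ ((1:ℝ)/4)) 4,
            ← Real.rpow_mul (by positivity)]
          norm_num
        have h2b : 2*b ≤ a/2 := by
          have hcube : 2187*(n:ℝ)^5 ≤ (m:ℝ)^3 := by
            have h1 : ((n:ℝ)^4)^3 ≤ (m:ℝ)^3 := pow_le_pow_left₀ (by positivity) hmn4 3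
            have h2 : (3:ℝ)^7 ≤ (n:ℝ)^7 := pow_le_pow_left₀ (by norm_num) hn3 7
            have h4 : (3:ℝ)^7 * (n:ℝ)^5 ≤ (n:ℝ)^7 * (n:ℝ)^5 :=
              mul_le_mul_of_nonneg_right h2 (by positivity)
            have h5 : (n:ℝ)^7 * (n:ℝ)^5 = ((n:ℝ)^4)^3 := by ring
            norm_num at h4
            linarith
          have h16 : (2*b)^4 ≤ (a/2)^4 := by
            have he : (2*b)^4 = 16*((m:ℝ)*n) := by rw [show (2*b)^4 = 16*b^4 by ring, hb4]
            have he2 : (a/2)^4 = (m:ℝ)^4/(16*(n:ℝ)^4) := by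
              rw [hadef]; field_simp; ring
            rw [he, he2, le_div_iff₀ (by positivity)]
            nlinarith [mul_le_mul_of_nonneg_left hcube hmR.le,
              mul_pos hmR (pow_pos hnR 5)]
          exact le_of_pow_le_pow_left₀ (by norm_num) (by positivity) h16
        have hexp1 : -1 * u + ((m:ℝ)/n) * (Real.cosh 1 - 1) ≤ -a := by
          have h1 : Real.cosh 1 - 1 ≤ 1 := by linarith [cosh_one_le_two]
          rw [← hadef]
          nlinarith
        have hle : Real.exp (-1 * u + ((m:ℝ)/n) * (Real.cosh 1 - 1)) ≤ Real.exp (-a) :=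
          Real.exp_le_exp.2 hexp1
        have hA := (onesided μ n m hn S hmeas hindep hvals hunif y hy 1 u zero_le_one).trans
          (ENNReal.ofReal_le_ofReal hle)
        have hB := (onesided μ n m hn S hmeas hindep hvals hunif (-y)
          (by rw [norm_neg, hy]) 1 u zero_le_one).trans (ENNReal.ofReal_le_ofReal hle)
        refine hmain.trans ((add_le_add hA hB).trans ?_)
        rw [← ENNReal.ofReal_add (Real.exp_pos _).le (Real.exp_pos _).le]
        refine ENNReal.ofReal_le_ofReal ?_
        have hkey : Real.exp (-a) + Real.exp (-a) ≤ Real.exp (-2*b) := by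
          have h1 : (1:ℝ) ≤ a - 2*b := by linarith
          have h2 : (2:ℝ) ≤ Real.exp (a - 2*b) := by
            calc (2:ℝ) ≤ Real.exp 1 := by nlinarith [Real.exp_one_gt_d9]
              _ ≤ Real.exp (a - 2*b) := Real.exp_le_exp.2 h1
          have h3 : Real.exp (a - 2*b) * Real.exp (-a) = Real.exp (-2*b) := by
            rw [← Real.exp_add]; ring_nf
          nlinarith [Real.exp_pos (-a)]
        have := (Real.exp_pos (-t^2/4)).le
        linarith
      · -- impossible deviation: event is empty
        have hempty : {ω | t ≤ |@inner ℝ (EuclideanSpace ℝ (Fin n)) _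
            (c • ∑ k ∈ Finset.range m, S k ω) y|} = ∅ := by
          ext ω
          simp only [Set.mem_setOf_eq, Set.mem_empty_iff_false, iff_false, not_le]
          rw [hTins ω]
          have h1 : |c * T ω| = c * |T ω| := by rw [abs_mul, abs_of_pos hc]
          have h2 : c * |T ω| ≤ c * m := by
            have := hTbd ω
            nlinarith
          have h3 : c * m < t := by
            have hcm : (c*m)*sa = m := by
              rw [mul_comm c (m:ℝ), mul_assoc, hca, mul_one]
            have hmu : (m:ℝ) < u := lt_of_not_ge hum
            nlinarith
          calc |c * T ω| ≤ c * m := h1 ▸ h2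
            _ < t := h3
        rw [hempty, measure_empty]
        exact bot_le
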